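/- arXiv:2007.11609 — 3 statements merged into one kernel-verified Lean document; each statement's English description precedes it below -/
import Mathlib

section
/- Let m ≥ 1 and let L be a binary code of length m with cardinality M = |L|. Then the average Hamming distance of L satisfies ahd(L) ≥ (m+1)/2 − 2^(m−1)/M. -/
open Finset


private def eps (b : Bool) : ℝ := if b then -1 else 1

private lemma hd_eq {m : ℕ} (x y : Fin m → Bool) :
    (hammingDist x y : ℝ) = ∑ i, (1 - eps (x i) * eps (y i)) / 2 := by
  rw [hammingDist, Finset.card_filter, Nat.cast_sum]
  apply Finset.sum_congr rfl
  intro i _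
  cases hx : x i <;> cases hy : y i <;> norm_num [eps, hx, hy]



/-- The average Hamming distance of a binary code `L` of length `m`,
`ahd(L) = (1/|L|²) · Σ_{x∈L} Σ_{y∈L} hd(x,y)` (over all ordered pairs). -/
noncomputable def ahd {m : ℕ} (L : Finset (Fin m → Bool)) : ℝ :=
  (1 / (L.card : ℝ) ^ 2) * ∑ x ∈ L, ∑ y ∈ L, (hammingDist x y : ℝ)

set_option maxHeartbeats 1000000 in
/-- A binary code of length `m ≥ 1` with cardinality `M = |L|` satisfies
`ahd(L) ≥ (m+1)/2 − 2^(m−1)/M`. -/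
theorem ahd_lower_bound (m : ℕ) (hm : 1 ≤ m) (L : Finset (Fin m → Bool))
    (hL : L.Nonempty) :
    ((m : ℝ) + 1) / 2 - (2 : ℝ) ^ (m - 1) / (L.card : ℝ) ≤ ahd L := by
  classical
  set M : ℝ := (L.card : ℝ) with hMdef
  have hM0 : 0 < M := by rw [hMdef]; exact_mod_cast Finset.card_pos.mpr hL
  set χ : (Fin m → Bool) → (Fin m → Bool) → ℝ :=
    fun z x => ∏ i, if z i then eps (x i) else 1 with hχ
  set c : (Fin m → Bool) → ℝ := fun z => ∑ x ∈ L, χ z x with hc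
  -- Parseval
  have parseval : ∑ z : Fin m → Bool, (c z) ^ 2 = 2 ^ m * M := by
    have key : ∀ x y : Fin m → Bool,
        ∑ z : Fin m → Bool, χ z x * χ z y = if x = y then (2:ℝ) ^ m else 0 := by
      intro x y
      have h1 : ∀ z : Fin m → Bool, χ z x * χ z y =
          ∏ i, ((if z i then eps (x i) else 1) * (if z i then eps (y i) else 1)) := by
        intro z; rw [hχ]; rw [← Finset.prod_mul_distrib]
      simp_rw [h1]
      have h2 : ∀ i : Fin m, (∑ b : Bool, (if b then eps (x i) else 1) * (if b then eps (y i) else 1))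
          = if x i = y i then (2:ℝ) else 0 := by
        intro i
        cases hx : x i <;> cases hy : y i <;> norm_num [eps, hx, hy]
      calc ∑ z : Fin m → Bool,
            ∏ i, ((if z i then eps (x i) else 1) * (if z i then eps (y i) else 1))
          = ∏ i : Fin m, ∑ b : Bool,
              ((if b then eps (x i) else 1) * (if b then eps (y i) else 1)) :=
            (Fintype.prod_sum
              (fun (i : Fin m) (b : Bool) =>
                (if b then eps (x i) else 1) * (if b then eps (y i) else 1))).symm
        _ = ∏ i : Fin m, (if x i = y i then (2:ℝ) else 0) := by simp_rw [h2]
        _ = if x = y then (2:ℝ) ^ m else 0 := by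
            by_cases hxy : x = y
            · subst hxy; simp
            · obtain ⟨i, hi⟩ : ∃ i, x i ≠ y i := Function.ne_iff.mp hxy
              rw [if_neg hxy]
              exact Finset.prod_eq_zero (Finset.mem_univ i) (by simp [hi])
    calc ∑ z : Fin m → Bool, (c z) ^ 2
        = ∑ z : Fin m → Bool, ∑ x ∈ L, ∑ y ∈ L, χ z x * χ z y := by
          apply Finset.sum_congr rfl; intro z _
          rw [sq, hc, Finset.sum_mul_sum]
      _ = ∑ x ∈ L, ∑ z : Fin m → Bool, ∑ y ∈ L, χ z x * χ z y := Finset.sum_comm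
      _ = ∑ x ∈ L, ∑ y ∈ L, ∑ z : Fin m → Bool, χ z x * χ z y := by
          apply Finset.sum_congr rfl; intro x _; exact Finset.sum_comm
      _ = ∑ x ∈ L, ∑ y ∈ L, if x = y then (2:ℝ) ^ m else 0 := by
          simp_rw [key]
      _ = ∑ x ∈ L, (2:ℝ) ^ m := by
          apply Finset.sum_congr rfl; intro x hx
          rw [Finset.sum_ite_eq L x (fun _ => (2:ℝ)^m), if_pos hx]
      _ = 2 ^ m * M := by rw [Finset.sum_const, nsmul_eq_mul, mul_comm]
  have hz0 : c (fun _ => false) = M := by simp [hc, hχ, hMdef]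
  set e : Fin m → (Fin m → Bool) := fun i j => decide (j = i) with he
  have hce : ∀ i, c (e i) = ∑ x ∈ L, eps (x i) := by
    intro i
    rw [hc]
    apply Finset.sum_congr rfl; intro x _
    rw [hχ]
    simp only [he, decide_eq_true_eq]
    rw [Finset.prod_ite_eq' Finset.univ i (fun j => eps (x j))]
    simp
  have einj : Function.Injective e := by
    intro i i' h
    have := congrFun h i
    simpa [he] using this.symm
  have hsub : Finset.image e Finset.univ ⊆ Finset.univ.erase (fun _ => false) := by
    intro z hz
    simp only [Finset.mem_image] at hz
    obtain ⟨i, _, rfl⟩ := hz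
    refine Finset.mem_erase.mpr ⟨?_, Finset.mem_univ _⟩
    intro h
    have := congrFun h i
    simp [he] at this
  have singsum : ∑ i : Fin m, (c (e i)) ^ 2 ≤ 2 ^ m * M - M ^ 2 := by
    have h1 : ∑ z ∈ Finset.image e Finset.univ, (c z) ^ 2 = ∑ i : Fin m, (c (e i)) ^ 2 :=
      Finset.sum_image (fun a _ b _ h => einj h)
    have h2 : ∑ z ∈ Finset.image e Finset.univ, (c z) ^ 2
        ≤ ∑ z ∈ Finset.univ.erase (fun _ => false), (c z) ^ 2 :=
      Finset.sum_le_sum_of_subset_of_nonneg hsub (fun _ _ _ => sq_nonneg _)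
    have h3 : ∑ z ∈ Finset.univ.erase (fun _ => false), (c z) ^ 2
        = (∑ z : Fin m → Bool, (c z) ^ 2) - (c (fun _ => false)) ^ 2 := by
      rw [← Finset.sum_erase_add Finset.univ _ (Finset.mem_univ (fun _ => false))]
      ring
    rw [← h1]
    rw [h3, parseval, hz0] at h2
    exact h2
  -- total distance sum
  have hsq1 : ∑ x ∈ L, ∑ y ∈ L, (1:ℝ) = M ^ 2 := by
    simp [hMdef, sq]
  have hS : ∑ x ∈ L, ∑ y ∈ L, (hammingDist x y : ℝ)
      = (m * M ^ 2 - ∑ i : Fin m, (c (e i)) ^ 2) / 2 := by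
    calc ∑ x ∈ L, ∑ y ∈ L, (hammingDist x y : ℝ)
        = ∑ x ∈ L, ∑ y ∈ L, ∑ i : Fin m, (1 - eps (x i) * eps (y i)) / 2 := by
          simp_rw [hd_eq]
      _ = ∑ x ∈ L, ∑ i : Fin m, ∑ y ∈ L, (1 - eps (x i) * eps (y i)) / 2 := by
          apply Finset.sum_congr rfl; intro x _; exact Finset.sum_comm
      _ = ∑ i : Fin m, ∑ x ∈ L, ∑ y ∈ L, (1 - eps (x i) * eps (y i)) / 2 := Finset.sum_comm
      _ = ∑ i : Fin m, (M ^ 2 - (∑ x ∈ L, eps (x i)) * (∑ y ∈ L, eps (y i))) / 2 := by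
          apply Finset.sum_congr rfl; intro i _
          rw [Finset.sum_mul_sum, ← hsq1, ← Finset.sum_sub_distrib, Finset.sum_div]
          apply Finset.sum_congr rfl; intro x _
          rw [← Finset.sum_sub_distrib, Finset.sum_div]
      _ = (m * M ^ 2 - ∑ i : Fin m, (c (e i)) ^ 2) / 2 := by
          simp_rw [hce, ← sq]
          rw [← Finset.sum_div, Finset.sum_sub_distrib, Finset.sum_const, Finset.card_univ,
            Fintype.card_fin, nsmul_eq_mul]
  have h2m : (2:ℝ) ^ m = 2 ^ (m - 1) * 2 := by
    rw [← pow_succ, Nat.sub_add_cancel hm]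
  have hSge : ((m : ℝ) + 1) / 2 * M ^ 2 - 2 ^ (m-1) * M
      ≤ ∑ x ∈ L, ∑ y ∈ L, (hammingDist x y : ℝ) := by
    rw [hS]
    nlinarith [singsum]
  rw [ahd, one_div, ← div_eq_inv_mul, le_div_iff₀ (by positivity)]
  have : ((m:ℝ) + 1) / 2 - 2 ^ (m-1) / M = (((m:ℝ)+1)/2 * M^2 - 2^(m-1)*M) / M^2 := by
    field_simp
  rw [this, div_mul_cancel₀ _ (by positivity)]
  exact hSge
end

section
/- Let m ≥ 1 and let L be a binary code of length m. Then the average Hamming distance of L satisfies ahd(L) ≤ 2·ahw(L) − 2·ahw(L)²/m. -/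
/-- The Hamming weight of a binary vector: the number of nonzero coordinates. -/
def hw {m : ℕ} (x : Fin m → Bool) : ℕ :=
  (Finset.univ.filter fun i => x i = true).card

/-- The average Hamming weight of a binary code `L`,
`ahw(L) = (1/|L|) · Σ_{x∈L} hw(x)`. -/
noncomputable def ahw {m : ℕ} (L : Finset (Fin m → Bool)) : ℝ :=
  (1 / (L.card : ℝ)) * ∑ x ∈ L, (hw x : ℝ)

/-- A binary code of length `m ≥ 1` satisfies `ahd(L) ≤ 2·ahw(L) − 2·ahw(L)²/m`. -/
theorem ahd_upper_bound_ahw (m : ℕ) (hm : 1 ≤ m) (L : Finset (Fin m → Bool))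
    (hL : L.Nonempty) :
    ahd L ≤ 2 * ahw L - 2 * (ahw L) ^ 2 / (m : ℝ) := by
  classical
  have hn : 0 < (L.card : ℝ) := by exact_mod_cast hL.card_pos
  have hm' : 0 < (m : ℝ) := by exact_mod_cast hm
  set n : ℝ := (L.card : ℝ) with hndef
  set a : Fin m → (Fin m → Bool) → ℝ := fun i x => if x i = true then 1 else 0 with ha
  set k : Fin m → ℝ := fun i => ∑ x ∈ L, a i x with hk
  have hhw : ∀ x : Fin m → Bool, (hw x : ℝ) = ∑ i, a i x := by
    intro x
    rw [hw, ha]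
    simp [Finset.sum_boole]
  have hsum_hw : ∑ x ∈ L, (hw x : ℝ) = ∑ i, k i := by
    simp_rw [hhw, hk]
    rw [Finset.sum_comm]
  have hhd : ∀ x y : Fin m → Bool, (hammingDist x y : ℝ)
      = ∑ i, (a i x + a i y - 2 * a i x * a i y) := by
    intro x y
    have h1 : (hammingDist x y : ℝ) = ∑ i, if x i ≠ y i then (1 : ℝ) else 0 := by
      rw [hammingDist, Finset.sum_boole]
    rw [h1]
    refine Finset.sum_congr rfl fun i _ => ?_
    rw [ha]
    cases hx : x i <;> cases hy : y i <;> simp [hx, hy] <;> norm_num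
  have key : ∀ i : Fin m, ∑ x ∈ L, ∑ y ∈ L, (a i x + a i y - 2 * a i x * a i y)
      = 2 * n * k i - 2 * k i * k i := by
    intro i
    have h1 : ∀ x : Fin m → Bool, ∑ y ∈ L, (a i x + a i y - 2 * a i x * a i y)
        = n * a i x + k i - 2 * a i x * k i := by
      intro x
      rw [Finset.sum_sub_distrib, Finset.sum_add_distrib, Finset.sum_const,
        nsmul_eq_mul, ← Finset.mul_sum, hk]
    have h2 : ∑ x ∈ L, 2 * a i x * k i = 2 * k i * k i := by
      rw [← Finset.sum_mul, ← Finset.mul_sum]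
    have h3 : (∑ x ∈ L, a i x) = k i := rfl
    rw [Finset.sum_congr rfl fun x _ => h1 x]
    rw [Finset.sum_sub_distrib, Finset.sum_add_distrib, Finset.sum_const,
      nsmul_eq_mul, ← Finset.mul_sum, h2, h3, ← hndef]
    ring
  have hsum_hd : ∑ x ∈ L, ∑ y ∈ L, (hammingDist x y : ℝ)
      = ∑ i, (2 * n * k i - 2 * k i * k i) := by
    simp_rw [hhd]
    rw [Finset.sum_congr rfl fun x _ => Finset.sum_comm, Finset.sum_comm]
    exact Finset.sum_congr rfl fun i _ => key i
  set S : ℝ := ∑ i, k i with hS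
  set Q : ℝ := ∑ i, k i ^ 2 with hQ
  have hCS : S ^ 2 ≤ m * Q := by
    have := sq_sum_le_card_mul_sum_sq (s := (Finset.univ : Finset (Fin m))) (f := k)
    simpa [hS, hQ] using this
  have hsum' : ∑ i, (2 * n * k i - 2 * k i * k i) = 2 * n * S - 2 * Q := by
    rw [Finset.sum_sub_distrib, ← Finset.mul_sum, ← hS]
    congr 1
    rw [hQ, Finset.mul_sum]
    exact Finset.sum_congr rfl fun i _ => by ring
  rw [ahd, ahw, hsum_hd, hsum_hw, hsum', ← hndef]
  have hn2 : (0:ℝ) < n ^ 2 := by positivity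
  have e1 : 1 / n ^ 2 * (2 * n * S - 2 * Q) = (2 * n * S - 2 * Q) / n ^ 2 := by ring
  have e2 : 2 * (1 / n * S) - 2 * (1 / n * S) ^ 2 / (m : ℝ)
      = (2 * n * S * m - 2 * S ^ 2) / (n ^ 2 * m) := by
    field_simp
  rw [e1, e2, div_le_div_iff₀ hn2 (by positivity)]
  nlinarith [mul_le_mul_of_nonneg_left hCS hn2.le]
end

section
/- Let m ≥ 1, let L be a binary code of length m, let Dens = ahw(L)/m be the label density, and let c > 0 be a real constant (the matching probability factor r₀^{d·τ#}). Then the expected Hamming-loss fitness F̄ = c·(1 − ahd(L)/m) satisfies the lower bound c·(2·Dens² − 2·Dens + 1) ≤ F̄. Moreover, the quadratic lower bound 2·Dens² − 2·Dens + 1 attains its minimum value 1/2 at Dens = 1/2. -/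
lemma hd_as_sum {m : ℕ} (x y : Fin m → Bool) :
    (hammingDist x y : ℝ) = ∑ i, ((if x i then (1:ℝ) else 0) + (if y i then (1:ℝ) else 0)
      - 2 * (if x i then (1:ℝ) else 0) * (if y i then (1:ℝ) else 0)) := by
  rw [hammingDist, Finset.card_filter]
  push_cast
  refine Finset.sum_congr rfl fun i _ => ?_
  cases hx : x i <;> cases hy : y i <;> simp <;> norm_num

lemma hw_as_sum {m : ℕ} (x : Fin m → Bool) :
    (hw x : ℝ) = ∑ i, (if x i then (1:ℝ) else 0) := by
  rw [hw, Finset.card_filter]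
  push_cast
  exact Finset.sum_congr rfl fun i _ => by simp

lemma sum_comm3 {α β γ M : Type*} [AddCommMonoid M] (s : Finset α) (t : Finset β)
    (u : Finset γ) (f : α → β → γ → M) :
    ∑ x ∈ s, ∑ y ∈ t, ∑ i ∈ u, f x y i = ∑ i ∈ u, ∑ x ∈ s, ∑ y ∈ t, f x y i :=
  calc ∑ x ∈ s, ∑ y ∈ t, ∑ i ∈ u, f x y i
      = ∑ x ∈ s, ∑ i ∈ u, ∑ y ∈ t, f x y i :=
        Finset.sum_congr rfl fun x _ => Finset.sum_comm
    _ = ∑ i ∈ u, ∑ x ∈ s, ∑ y ∈ t, f x y i := Finset.sum_comm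

lemma double_sum_ne {α : Type*} (L : Finset α) (b : α → ℝ) :
    ∑ x ∈ L, ∑ y ∈ L, (b x + b y - 2 * b x * b y)
      = 2 * (L.card : ℝ) * (∑ x ∈ L, b x) - 2 * (∑ x ∈ L, b x) ^ 2 := by
  simp only [Finset.sum_sub_distrib, Finset.sum_add_distrib, Finset.sum_const, nsmul_eq_mul,
    ← Finset.mul_sum, Finset.sum_mul]
  rw [← Finset.sum_mul, ← Finset.mul_sum, sq]
  ring


/-- For a binary code `L` of length `m ≥ 1`, label density `Dens = ahw(L)/m`, and a
matching-probability constant `c > 0`, the expected Hamming-loss fitness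
`F̄ = c·(1 − ahd(L)/m)` satisfies `c·(2·Dens² − 2·Dens + 1) ≤ F̄`; moreover, the
quadratic lower bound `2·x² − 2·x + 1` attains its minimum value `1/2` at `x = 1/2`. -/
theorem expected_fitness_lower_bound (m : ℕ) (hm : 1 ≤ m)
    (L : Finset (Fin m → Bool)) (hL : L.Nonempty) (c : ℝ) (hc : 0 < c)
    (Dens : ℝ) (hDens : Dens = ahw L / (m : ℝ)) :
    c * (2 * Dens ^ 2 - 2 * Dens + 1) ≤ c * (1 - ahd L / (m : ℝ)) ∧
    (∀ x : ℝ, (1 : ℝ) / 2 ≤ 2 * x ^ 2 - 2 * x + 1) ∧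
    2 * ((1 : ℝ) / 2) ^ 2 - 2 * ((1 : ℝ) / 2) + 1 = 1 / 2 := by
  refine ⟨?_, fun x => by nlinarith [sq_nonneg (x - 1/2)], by norm_num⟩
  set n : ℝ := (L.card : ℝ) with hn
  have hn1 : (1:ℝ) ≤ n := by exact_mod_cast Nat.one_le_cast.mpr hL.card_pos
  have hm1 : (1:ℝ) ≤ (m:ℝ) := by exact_mod_cast hm
  set K : Fin m → ℝ := fun i => ∑ x ∈ L, (if x i then (1:ℝ) else 0) with hK
  set S : ℝ := ∑ i, K i with hS
  set Q : ℝ := ∑ i, K i ^ 2 with hQ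
  have hsum : ∑ x ∈ L, ∑ y ∈ L, (hammingDist x y : ℝ) = 2 * n * S - 2 * Q := by
    simp only [hd_as_sum]
    rw [sum_comm3]
    have hper : ∀ i : Fin m, ∑ x ∈ L, ∑ y ∈ L, ((if x i then (1:ℝ) else 0)
        + (if y i then (1:ℝ) else 0)
        - 2 * (if x i then (1:ℝ) else 0) * (if y i then (1:ℝ) else 0))
        = 2 * n * K i - 2 * K i ^ 2 := fun i => by
      simpa [hK, ← hn] using double_sum_ne L (fun x => if x i then (1:ℝ) else 0)
    rw [Finset.sum_congr rfl fun i _ => hper i, Finset.sum_sub_distrib,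
      ← Finset.mul_sum, ← Finset.mul_sum, ← hS, ← hQ]
  have hwsum : ∑ x ∈ L, (hw x : ℝ) = S := by
    simp only [hw_as_sum]; rw [Finset.sum_comm]
  have hcs : S ^ 2 ≤ (m:ℝ) * Q := by
    have := sq_sum_le_card_mul_sum_sq (s := (Finset.univ : Finset (Fin m))) (f := K)
    simpa [hS, hQ] using this
  have hahd : ahd L = (1 / n ^ 2) * (2 * n * S - 2 * Q) := by rw [ahd, hsum]
  have hD : Dens = S / (n * m) := by
    rw [hDens, ahw, hwsum]; field_simp; rw [hn]; ring
  have hn0 : (0:ℝ) < n := by linarith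
  have hm0 : (0:ℝ) < (m:ℝ) := by linarith
  have e : 2 * Dens - 2 * Dens ^ 2 - ahd L / (m:ℝ)
      = (2 / (n ^ 2 * (m:ℝ) ^ 2)) * ((m:ℝ) * Q - S ^ 2) := by
    rw [hahd, hD]; field_simp; ring
  have h2 : 0 ≤ (2 / (n ^ 2 * (m:ℝ) ^ 2)) * ((m:ℝ) * Q - S ^ 2) :=
    mul_nonneg (by positivity) (by linarith)
  nlinarith [e, h2]
end
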